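/- Let n ≥ 1, let ι be a nonempty finite index set, let m : ι → ℝⁿ and b : ι → ℝ, and define the concave piecewise linear function F(u) = min_{j ∈ ι} (⟨m_j, u⟩ + b_j). Let ε > 0 and let η : ℝⁿ → ℝ be C^∞, nonnegative, with support contained in the closed ball of radius ε about 0 and with ∫ η = 1. Then H = F ⋆ η is smooth and for every x ∈ ℝⁿ, the gradient ∇H(x) lies in the convex hull of the set {m_j : j ∈ ι and there exists y in the closed ball of radius ε about x with F(y) = ⟨m_j, y⟩ + b_j}. -/

import Mathlib

open scoped RealInnerProductSpace
open MeasureTheory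

/-- For the concave piecewise linear function
`F(u) = min_j (⟪m j, u⟫ + b j)` and a smooth nonnegative mollifier `η` supported in the closed
`ε`-ball with total integral `1`, the mollification `H = F ⋆ η` is smooth and its gradient at
any point `x` lies in the convex hull of the slopes `m j` of those linear pieces that are
active somewhere in the closed `ε`-ball about `x`. -/
theorem statement6 (n : ℕ) (hn : 1 ≤ n)
    (ι : Type) [Fintype ι] [Nonempty ι]
    (m : ι → EuclideanSpace ℝ (Fin n)) (b : ι → ℝ)
    (F : EuclideanSpace ℝ (Fin n) → ℝ)
    (hF : ∀ u, F u = Finset.univ.inf' Finset.univ_nonempty fun j => ⟪m j, u⟫ + b j)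
    (ε : ℝ) (hε : 0 < ε)
    (η : EuclideanSpace ℝ (Fin n) → ℝ)
    (hηsmooth : ContDiff ℝ (⊤ : ℕ∞) η)
    (hηnonneg : ∀ y, 0 ≤ η y)
    (hηsupp : Function.support η ⊆ Metric.closedBall 0 ε)
    (hηone : ∫ y, η y = 1)
    (H : EuclideanSpace ℝ (Fin n) → ℝ)
    (hH : ∀ x, H x = ∫ y, F (x - y) * η y) :
    ContDiff ℝ (⊤ : ℕ∞) H ∧
    ∀ x, gradient H x ∈ convexHull ℝ
      {v : EuclideanSpace ℝ (Fin n) | ∃ j,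
        (∃ y ∈ Metric.closedBall x ε, F y = ⟪m j, y⟫ + b j) ∧ v = m j} := by
  classical
  have hne : (Finset.univ : Finset ι).Nonempty := Finset.univ_nonempty
  -- continuity of F
  have hFcont : Continuous F := by
    have h1 : Continuous fun u : EuclideanSpace ℝ (Fin n) =>
        Finset.univ.inf' hne fun j => ⟪m j, u⟫ + b j := by
      rw [continuous_iff_continuousAt]
      intro x
      exact ContinuousAt.finset_inf'_apply hne fun i _ =>
        ((continuous_const.inner continuous_id).add continuous_const).continuousAt
    exact h1.congr fun u => (hF u).symm
  have hηcont : Continuous η := hηsmooth.continuous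
  have hηcs : HasCompactSupport η :=
    HasCompactSupport.intro (isCompact_closedBall (0 : EuclideanSpace ℝ (Fin n)) ε)
      (fun y hy => Function.notMem_support.mp (fun hs => hy (hηsupp hs)))
  have hηint : Integrable η volume := hηcont.integrable_of_hasCompactSupport hηcs
  have hFloc : LocallyIntegrable F volume := hFcont.locallyIntegrable
  -- H is the convolution η ⋆ F
  have hHconv : H = convolution η F (ContinuousLinearMap.mul ℝ ℝ) volume := by
    funext x
    rw [hH, convolution_def]
    simp only [ContinuousLinearMap.mul_apply']
    exact integral_congr_ae (Filter.Eventually.of_forall fun y => mul_comm _ _)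
  have hHsmooth : ContDiff ℝ (⊤ : ℕ∞) H := by
    rw [hHconv]
    exact hηcs.contDiff_convolution_left _ hηsmooth hFloc
  refine ⟨hHsmooth, ?_⟩
  intro x
  set S : Set (EuclideanSpace ℝ (Fin n)) := {v | ∃ j,
      (∃ y ∈ Metric.closedBall x ε, F y = ⟪m j, y⟫ + b j) ∧ v = m j} with hSdef
  set A : Finset ι := Finset.univ.filter
      (fun j => ∃ y ∈ Metric.closedBall x ε, F y = ⟪m j, y⟫ + b j) with hAdef
  have hA : A.Nonempty := by
    obtain ⟨j, _, hj⟩ := Finset.exists_mem_eq_inf' hne (fun j => ⟪m j, x⟫ + b j)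
    exact ⟨j, Finset.mem_filter.2 ⟨Finset.mem_univ j,
      x, Metric.mem_closedBall_self hε.le, (hF x).trans hj⟩⟩
  have hSA : S = ↑(A.image m) := by
    ext v
    constructor
    · rintro ⟨j, hj, rfl⟩
      exact Finset.mem_coe.2 (Finset.mem_image.2
        ⟨j, Finset.mem_filter.2 ⟨Finset.mem_univ _, hj⟩, rfl⟩)
    · intro hv
      obtain ⟨j, hj, rfl⟩ := Finset.mem_image.1 (Finset.mem_coe.1 hv)
      exact ⟨j, (Finset.mem_filter.1 hj).2, rfl⟩
  -- integrability of the integrands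
  have hint : ∀ w : EuclideanSpace ℝ (Fin n),
      Integrable (fun y => F (w - y) * η y) volume := by
    intro w
    apply Continuous.integrable_of_hasCompactSupport
    · exact (hFcont.comp (continuous_const.sub continuous_id)).mul hηcont
    · apply HasCompactSupport.intro (isCompact_closedBall (0 : EuclideanSpace ℝ (Fin n)) ε)
      intro y hy
      have h0 : η y = 0 := Function.notMem_support.mp (fun hs => hy (hηsupp hs))
      simp [h0]
  -- key difference quotient inequality
  have key : ∀ (v : EuclideanSpace ℝ (Fin n)) (t : ℝ), 0 < t →
      H (x + t • v) - H x ≤ t * (A.sup' hA fun j => ⟪m j, v⟫) := by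
    intro v t ht
    set M := A.sup' hA fun j => ⟪m j, v⟫ with hM
    have hintM : Integrable (fun y => (t * M) * η y) volume := hηint.const_mul _
    rw [hH (x + t • v), hH x, ← integral_sub (hint _) (hint _)]
    have hpt : ∀ y, F (x + t • v - y) * η y - F (x - y) * η y ≤ (t * M) * η y := by
      intro y
      rcases eq_or_ne (η y) 0 with h0 | h0
      · simp [h0]
      · have hy : y ∈ Metric.closedBall (0 : EuclideanSpace ℝ (Fin n)) ε := hηsupp h0
        have hynorm : ‖y‖ ≤ ε := by simpa using hy
        obtain ⟨j, _, hj⟩ := Finset.exists_mem_eq_inf' hne fun j => ⟪m j, x - y⟫ + b j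
        have h2 : F (x - y) = ⟪m j, x - y⟫ + b j := (hF _).trans hj
        have hjA : j ∈ A := by
          refine Finset.mem_filter.2 ⟨Finset.mem_univ _, x - y, ?_, h2⟩
          simpa [Metric.mem_closedBall, dist_eq_norm] using hynorm
        have h1 : F (x + t • v - y) ≤ ⟪m j, x + t • v - y⟫ + b j := by
          rw [hF]; exact Finset.inf'_le _ (Finset.mem_univ j)
        have hdiff : ⟪m j, x + t • v - y⟫ - ⟪m j, x - y⟫ = t * ⟪m j, v⟫ := by
          rw [← inner_sub_right]
          have he : (x + t • v - y) - (x - y) = t • v := by abel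
          rw [he, real_inner_smul_right]
        have h3 : F (x + t • v - y) - F (x - y) ≤ t * ⟪m j, v⟫ := by
          rw [h2]; linarith
        have hMj : ⟪m j, v⟫ ≤ M := by
          rw [hM]; exact Finset.le_sup' (fun j => (⟪m j, v⟫ : ℝ)) hjA
        have h4 : F (x + t • v - y) - F (x - y) ≤ t * M :=
          h3.trans (by nlinarith)
        calc F (x + t • v - y) * η y - F (x - y) * η y
            = (F (x + t • v - y) - F (x - y)) * η y := by ring
          _ ≤ (t * M) * η y := mul_le_mul_of_nonneg_right h4 (hηnonneg y)
    calc (∫ y, (F (x + t • v - y) * η y - F (x - y) * η y))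
        ≤ ∫ y, (t * M) * η y :=
          integral_mono ((hint _).sub (hint _)) hintM hpt
      _ = t * M := by rw [integral_const_mul, hηone, mul_one]
  -- directional derivative bound
  have hHdiff : DifferentiableAt ℝ H x := (hHsmooth.differentiable (by simp)) x
  have hbound : ∀ v : EuclideanSpace ℝ (Fin n),
      ⟪gradient H x, v⟫ ≤ A.sup' hA fun j => ⟪m j, v⟫ := by
    intro v
    set M := A.sup' hA fun j => ⟪m j, v⟫ with hM
    have hfd : HasFDerivAt H (fderiv ℝ H x) x := hHdiff.hasFDerivAt
    have hg0 : HasDerivAt (fun t : ℝ => x + t • v) v 0 := by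
      simpa using ((hasDerivAt_id (0 : ℝ)).smul_const v).const_add x
    have hline : HasDerivAt (fun t : ℝ => H (x + t • v)) (fderiv ℝ H x v) 0 := by
      have hfd' : HasFDerivAt H (fderiv ℝ H x) (x + (0 : ℝ) • v) := by
        simpa using hfd
      exact hfd'.comp_hasDerivAt 0 hg0
    rw [hasDerivAt_iff_tendsto_slope] at hline
    have hsub : Filter.Tendsto (slope (fun t : ℝ => H (x + t • v)) 0)
        (nhdsWithin 0 (Set.Ioi 0)) (nhds (fderiv ℝ H x v)) :=
      hline.mono_left (nhdsWithin_mono 0 (fun t ht => ne_of_gt ht))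
    have hle : fderiv ℝ H x v ≤ M := by
      refine le_of_tendsto hsub ?_
      filter_upwards [self_mem_nhdsWithin] with t ht
      have ht' : (0 : ℝ) < t := ht
      rw [slope_def_field]
      have h0 : H (x + (0 : ℝ) • v) = H x := by norm_num
      rw [h0, sub_zero, div_le_iff₀ ht']
      have := key v t ht'
      linarith [this, mul_comm t M]
    have hgrad : ⟪gradient H x, v⟫ = fderiv ℝ H x v :=
      InnerProductSpace.toDual_symm_apply
    rw [hgrad]; exact hle
  -- separation argument
  by_contra hnot
  have hSfin : S.Finite := by rw [hSA]; exact (A.image m).finite_toSet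
  have hclosed : IsClosed (convexHull ℝ S) := hSfin.isClosed_convexHull ℝ
  obtain ⟨f, u, hfu, hup⟩ :=
    geometric_hahn_banach_closed_point (convex_convexHull ℝ S) hclosed hnot
  set v := (InnerProductSpace.toDual ℝ (EuclideanSpace ℝ (Fin n))).symm f with hv
  have hfv : ∀ z, f z = ⟪v, z⟫ := fun z => InnerProductSpace.toDual_symm_apply.symm
  obtain ⟨j0, hj0A, hj0⟩ := Finset.exists_mem_eq_sup' hA fun j => ⟪m j, v⟫
  have hmj0 : m j0 ∈ convexHull ℝ S := subset_convexHull ℝ S (by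
    rw [hSA]; exact Finset.mem_coe.2 (Finset.mem_image.2 ⟨j0, hj0A, rfl⟩))
  have h2 : f (m j0) < u := hfu _ hmj0
  have h3 : u < f (gradient H x) := hup
  rw [hfv] at h2 h3
  have h1 : ⟪gradient H x, v⟫ ≤ (A.sup' hA fun j => ⟪m j, v⟫) := hbound v
  rw [hj0] at h1
  have hc1 : ⟪gradient H x, v⟫ = ⟪v, gradient H x⟫ := real_inner_comm _ _
  have hc2 : ⟪m j0, v⟫ = ⟪v, m j0⟫ := real_inner_comm _ _
  linarith
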